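/- Let P be a symmetric irreducible stochastic matrix, let Π be the infinite-time Cesaro matrix of the quantum walk e^{−iPt} with α := max_{x,x'} (1/2)‖Π(·,x) − Π(·,x')‖₁ < 1, and suppose T is such that the finite-time Cesaro matrix P̄_T := (1/T)∫₀^T P_t dt satisfies (1/2)‖P̄_T − Π‖₁ ≤ (1−α)/4 (column-wise). Then for T' ≥ ⌈log_{2/(1+α)} ε⁻¹⌉, the T'-fold iterate (P̄_T)^{T'} maps every initial basis state to a distribution within total variation distance ε of the uniform distribution on the N states. -/

import Mathlib

open Matrix Filter

/-- Dobrushin-type contraction: a column-stochastic kernel with pairwise column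
ℓ¹-distance at most `2β` contracts mean-zero vectors by `β` in ℓ¹. -/
lemma stmt18_contraction {N : ℕ} (A : Matrix (Fin N) (Fin N) ℝ) (β : ℝ) (hβ : 0 ≤ β)
    (hδ : ∀ x x' : Fin N, ∑ y, |A y x - A y x'| ≤ 2 * β)
    (v : Fin N → ℝ) (hv : ∑ x, v x = 0) :
    ∑ y, |∑ x, A y x * v x| ≤ β * ∑ x, |v x| := by
  classical
  set p : Fin N → ℝ := fun x => max (v x) 0 with hp
  set q : Fin N → ℝ := fun x => max (-v x) 0 with hq
  have hpq : ∀ x, v x = p x - q x := fun x => (max_zero_sub_max_neg_zero_eq_self (v x)).symm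
  have hp0 : ∀ x, 0 ≤ p x := fun x => le_max_right _ _
  have hq0 : ∀ x, 0 ≤ q x := fun x => le_max_right _ _
  have habs : ∀ x, |v x| = p x + q x := by
    intro x
    rcases le_total 0 (v x) with h | h
    · simp [hp, hq, abs_of_nonneg h, max_eq_left h, max_eq_right (neg_nonpos.mpr h)]
    · simp [hp, hq, abs_of_nonpos h, max_eq_right h, max_eq_left (neg_nonneg.mpr h)]
  set s : ℝ := ∑ x, p x with hs
  have hqs : ∑ x, q x = s := by
    have h0 : ∑ x, (p x - q x) = 0 := by
      rw [← hv]; exact Finset.sum_congr rfl fun x _ => (hpq x).symm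
    rw [Finset.sum_sub_distrib] at h0
    linarith
  have habs_sum : ∑ x, |v x| = 2 * s := by
    calc ∑ x, |v x| = ∑ x, (p x + q x) := Finset.sum_congr rfl fun x _ => habs x
      _ = s + s := by rw [Finset.sum_add_distrib, hqs]
      _ = 2 * s := by ring
  have hs0 : 0 ≤ s := Finset.sum_nonneg fun x _ => hp0 x
  rcases eq_or_lt_of_le hs0 with hs' | hs'
  · -- s = 0, so v = 0
    have hv0 : ∀ x, v x = 0 := by
      intro x
      have h1 : ∀ x ∈ Finset.univ, p x = 0 :=
        (Finset.sum_eq_zero_iff_of_nonneg fun x _ => hp0 x).mp hs'.symm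
      have h2 : ∀ x ∈ Finset.univ, q x = 0 := by
        apply (Finset.sum_eq_zero_iff_of_nonneg fun x _ => hq0 x).mp
        rw [hqs]; exact hs'.symm
      rw [hpq x, h1 x (Finset.mem_univ x), h2 x (Finset.mem_univ x), sub_zero]
    have : ∑ y, |∑ x, A y x * v x| = 0 := by
      apply Finset.sum_eq_zero
      intro y _
      rw [abs_eq_zero]
      exact Finset.sum_eq_zero fun x _ => by rw [hv0 x, mul_zero]
    rw [this, habs_sum, ← hs']
    ring_nf
    positivity
  · -- s > 0
    have key : ∀ y, ∑ x, ∑ x', p x * q x' * (A y x - A y x') = s * ∑ x, A y x * v x := by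
      intro y
      have h1 : ∑ x, ∑ x', p x * q x' * (A y x - A y x')
          = (∑ x, p x * A y x) * (∑ x', q x') - (∑ x, p x) * (∑ x', q x' * A y x') := by
        rw [Finset.sum_mul_sum, Finset.sum_mul_sum, ← Finset.sum_sub_distrib]
        refine Finset.sum_congr rfl fun x _ => ?_
        rw [← Finset.sum_sub_distrib]
        exact Finset.sum_congr rfl fun x' _ => by ring
      rw [h1, hqs, ← hs]
      have h2 : ∑ x, A y x * v x = ∑ x, A y x * p x - ∑ x, A y x * q x := by
        rw [← Finset.sum_sub_distrib]
        exact Finset.sum_congr rfl fun x _ => by rw [hpq x]; ring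
      rw [h2]
      have h3 : ∑ x, p x * A y x = ∑ x, A y x * p x :=
        Finset.sum_congr rfl fun x _ => mul_comm _ _
      have h4 : ∑ x', q x' * A y x' = ∑ x, A y x * q x :=
        Finset.sum_congr rfl fun x _ => mul_comm _ _
      rw [h3, h4]; ring
    have hb1 : ∑ y, |∑ x, A y x * v x| = s⁻¹ * ∑ y, |∑ x, ∑ x', p x * q x' * (A y x - A y x')| := by
      rw [Finset.mul_sum]
      refine Finset.sum_congr rfl fun y _ => ?_
      rw [key y, abs_mul, abs_of_nonneg hs0, ← mul_assoc, inv_mul_cancel₀ (ne_of_gt hs'), one_mul]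
    rw [hb1]
    have hb2 : ∑ y, |∑ x, ∑ x', p x * q x' * (A y x - A y x')|
        ≤ ∑ x, ∑ x', p x * q x' * (2 * β) := by
      calc ∑ y, |∑ x, ∑ x', p x * q x' * (A y x - A y x')|
          ≤ ∑ y, ∑ x, ∑ x', p x * q x' * |A y x - A y x'| := by
            refine Finset.sum_le_sum fun y _ => ?_
            refine le_trans (Finset.abs_sum_le_sum_abs _ _) (Finset.sum_le_sum fun x _ => ?_)
            refine le_trans (Finset.abs_sum_le_sum_abs _ _) (Finset.sum_le_sum fun x' _ => ?_)
            rw [abs_mul, abs_mul, abs_of_nonneg (hp0 x), abs_of_nonneg (hq0 x')]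
        _ = ∑ x, ∑ x', ∑ y, p x * q x' * |A y x - A y x'| := by
            rw [Finset.sum_comm]
            exact Finset.sum_congr rfl fun x _ => Finset.sum_comm
        _ ≤ ∑ x, ∑ x', p x * q x' * (2 * β) := by
            refine Finset.sum_le_sum fun x _ => Finset.sum_le_sum fun x' _ => ?_
            rw [← Finset.mul_sum]
            exact mul_le_mul_of_nonneg_left (hδ x x') (mul_nonneg (hp0 x) (hq0 x'))
    have hb3 : ∑ x, ∑ x', p x * q x' * (2 * β) = s * s * (2 * β) := by
      calc ∑ x, ∑ x', p x * q x' * (2 * β)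
          = (∑ x, ∑ x', p x * q x') * (2 * β) := by
            rw [Finset.sum_mul]
            exact Finset.sum_congr rfl fun x _ => (Finset.sum_mul _ _ _).symm
        _ = s * s * (2 * β) := by rw [← Finset.sum_mul_sum, hqs, ← hs]
    calc s⁻¹ * ∑ y, |∑ x, ∑ x', p x * q x' * (A y x - A y x')|
        ≤ s⁻¹ * (s * s * (2 * β)) := by
          rw [← hb3]
          exact mul_le_mul_of_nonneg_left hb2 (inv_nonneg.mpr hs0)
      _ = β * (2 * s) := by field_simp
      _ = β * ∑ x, |v x| := by rw [habs_sum]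


open NormedSpace in
/-- Columns and rows of `|exp(-iPt)|²` sum to one when `P` is real symmetric. -/
lemma stmt18_unitary {N : ℕ} (P : Matrix (Fin N) (Fin N) ℝ) (hsymm : P.IsSymm) (t : ℝ) :
    (∀ x, ∑ y, ‖
        ((exp ((-(Complex.I * t)) • P.map Complex.ofReal)) y x)‖ ^ 2 = 1)
    ∧ (∀ y, ∑ x, ‖
        ((exp ((-(Complex.I * t)) • P.map Complex.ofReal)) y x)‖ ^ 2 = 1) := by
  set M : Matrix (Fin N) (Fin N) ℂ := (-(Complex.I * t)) • P.map Complex.ofReal with hM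
  have hPm : (P.map (Complex.ofReal)).conjTranspose = P.map Complex.ofReal := by
    ext i j
    simp only [conjTranspose_apply, Matrix.map_apply, RCLike.star_def, Complex.conj_ofReal]
    norm_cast
    exact congrFun (congrFun hsymm i) j
  have hMh : Mᴴ = -M := by
    rw [hM, conjTranspose_smul, hPm, ← neg_smul]
    congr 1
    simp [Complex.conj_I]
  have h1 : exp (-M) * exp M = 1 := by
    rw [← Matrix.exp_add_of_commute (-M) M (Commute.refl M).neg_left, neg_add_cancel, exp_zero]
  have h2 : exp M * exp (-M) = 1 := by
    rw [← Matrix.exp_add_of_commute M (-M) (Commute.refl M).neg_right, add_neg_cancel, exp_zero]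
  have hCT : (exp M)ᴴ = exp (-M) := by
    rw [← hMh, Matrix.exp_conjTranspose]
  have hnormSq : ∀ z : ℂ, star z * z = ((‖z‖ ^ 2 : ℝ) : ℂ) := by
    intro z
    rw [Complex.sq_norm]
    exact Complex.normSq_eq_conj_mul_self.symm
  have hnormSq' : ∀ z : ℂ, z * star z = ((‖z‖ ^ 2 : ℝ) : ℂ) := by
    intro z
    rw [mul_comm]; exact hnormSq z
  constructor
  · intro x
    have e : ((exp M)ᴴ * exp M) x x = 1 := by
      rw [hCT, h1, Matrix.one_apply_eq]
    rw [Matrix.mul_apply] at e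
    simp only [conjTranspose_apply] at e
    have e2 : ((∑ y, ‖(exp M) y x‖ ^ 2 : ℝ) : ℂ) = 1 := by
      rw [Complex.ofReal_sum, ← e]
      exact Finset.sum_congr rfl fun y _ => (hnormSq _).symm
    exact_mod_cast e2
  · intro y
    have e : (exp M * (exp M)ᴴ) y y = 1 := by
      rw [hCT, h2, Matrix.one_apply_eq]
    rw [Matrix.mul_apply] at e
    simp only [conjTranspose_apply] at e
    have e2 : ((∑ x, ‖(exp M) y x‖ ^ 2 : ℝ) : ℂ) = 1 := by
      rw [Complex.ofReal_sum, ← e]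
      exact Finset.sum_congr rfl fun x _ => (hnormSq' _).symm
    exact_mod_cast e2

lemma stmt18_cont {N : ℕ} (P : Matrix (Fin N) (Fin N) ℝ) (y x : Fin N) :
    Continuous fun t : ℝ => ‖
      ((NormedSpace.exp ((-(Complex.I * t)) • P.map Complex.ofReal)) y x)‖ ^ 2 := by
  have hexp : Continuous (NormedSpace.exp : Matrix (Fin N) (Fin N) ℂ → _) := by
    letI : SeminormedRing (Matrix (Fin N) (Fin N) ℂ) := Matrix.linftyOpSemiNormedRing
    letI : NormedRing (Matrix (Fin N) (Fin N) ℂ) := Matrix.linftyOpNormedRing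
    letI : NormedAlgebra ℚ (Matrix (Fin N) (Fin N) ℂ) := Matrix.linftyOpNormedAlgebra
    exact @NormedSpace.exp_continuous _ _ _ (inferInstanceAs (CompleteSpace (Fin N → Fin N → ℂ)))
  have h1 : Continuous fun t : ℝ =>
      ((-(Complex.I * t)) • P.map Complex.ofReal : Matrix (Fin N) (Fin N) ℂ) :=
    ((continuous_const.mul Complex.continuous_ofReal).neg).smul continuous_const
  exact (continuous_norm.comp ((hexp.comp h1).matrix_elem y x)).pow 2

/-- Convergence time of the double-loop quantum sampling algorithm: let `P` be a
symmetric irreducible stochastic matrix, `P̄_T` the finite-time Cesaro matrix of the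
quantum walk `e^{−iPt}`, `Π = lim_{T→∞} P̄_T` the infinite-time Cesaro matrix with
maximum pairwise column distance `α < 1`.  If `T` is such that each column of `P̄_T`
is within total variation distance `(1−α)/4` of the corresponding column of `Π`, then
for `T' ≥ ⌈log_{2/(1+α)} ε⁻¹⌉`, every column of `(P̄_T)^{T'}` is within total
variation distance `ε` of the uniform distribution. -/
theorem stmt18 {N : ℕ} (hN : 0 < N) (P : Matrix (Fin N) (Fin N) ℝ)
    (hsymm : P.IsSymm)
    (hnonneg : ∀ y x, 0 ≤ P y x) (hstoch : ∀ x, ∑ y, P y x = 1)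
    (hirr : ∀ x y : Fin N, ∃ n : ℕ, 0 < (P ^ n) y x)
    (Pbar : ℝ → Matrix (Fin N) (Fin N) ℝ)
    (hPbar : ∀ (T : ℝ) (y x : Fin N), Pbar T y x = (1/T) * ∫ t in (0:ℝ)..T,
      ‖(NormedSpace.exp ((-(Complex.I * t)) • P.map Complex.ofReal)) y x‖ ^ 2)
    (Pi' : Matrix (Fin N) (Fin N) ℝ)
    (hPi : ∀ y x, Tendsto (fun T => Pbar T y x) atTop (nhds (Pi' y x)))
    (α : ℝ)
    (hα : α = ⨆ x : Fin N, ⨆ x' : Fin N, (1/2) * ∑ y, |Pi' y x - Pi' y x'|)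
    (hα1 : α < 1)
    (T : ℝ)
    (hT : ∀ x : Fin N, (1/2) * ∑ y, |Pbar T y x - Pi' y x| ≤ (1 - α) / 4)
    (ε : ℝ) (hε : 0 < ε)
    (T' : ℕ) (hT' : ⌈Real.logb (2 / (1 + α)) ε⁻¹⌉₊ ≤ T') :
    ∀ x : Fin N, (1/2) * ∑ y, |((Pbar T) ^ T') y x - (N : ℝ)⁻¹| ≤ ε := by
  classical
  -- integrability of the integrand
  have hint : ∀ (S : ℝ) (y x : Fin N), IntervalIntegrable
      (fun t : ℝ => ‖
        ((NormedSpace.exp ((-(Complex.I * t)) • P.map Complex.ofReal)) y x)‖ ^ 2)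
      MeasureTheory.volume 0 S :=
    fun S y x => (stmt18_cont P y x).intervalIntegrable 0 S
  -- column sums of Pbar S for S ≠ 0
  have qcol : ∀ (S : ℝ), S ≠ 0 → ∀ x, ∑ y, Pbar S y x = 1 := by
    intro S hS x
    simp_rw [hPbar, ← Finset.mul_sum]
    rw [← intervalIntegral.integral_finset_sum (fun y _ => hint S y x)]
    rw [intervalIntegral.integral_congr
      (g := fun _ : ℝ => (1:ℝ)) (fun t _ => (stmt18_unitary P hsymm t).1 x)]
    rw [intervalIntegral.integral_const]
    simp [hS]
  -- row sums of Pbar S for S ≠ 0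
  have qrow : ∀ (S : ℝ), S ≠ 0 → ∀ y, ∑ x, Pbar S y x = 1 := by
    intro S hS y
    simp_rw [hPbar, ← Finset.mul_sum]
    rw [← intervalIntegral.integral_finset_sum (fun x _ => hint S y x)]
    rw [intervalIntegral.integral_congr
      (g := fun _ : ℝ => (1:ℝ)) (fun t _ => (stmt18_unitary P hsymm t).2 y)]
    rw [intervalIntegral.integral_const]
    simp [hS]
  -- nonnegativity of Pbar S for S ≠ 0
  have qnonneg : ∀ (S : ℝ), S ≠ 0 → ∀ y x, 0 ≤ Pbar S y x := by
    intro S hS y x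
    rw [hPbar]
    rcases lt_or_gt_of_ne hS with h | h
    · apply mul_nonneg_of_nonpos_of_nonpos
      · exact le_of_lt (one_div_neg.mpr h)
      · rw [intervalIntegral.integral_symm S 0, neg_nonpos]
        exact intervalIntegral.integral_nonneg h.le (fun u _ => by positivity)
    · exact mul_nonneg (by positivity)
        (intervalIntegral.integral_nonneg h.le (fun u _ => by positivity))
  -- facts about Pi'
  have hPinn : ∀ y x, 0 ≤ Pi' y x := by
    intro y x
    refine ge_of_tendsto (hPi y x) ?_
    filter_upwards [eventually_ne_atTop (0:ℝ)] with S hS using qnonneg S hS y x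
  have hPisum : ∀ x, ∑ y, Pi' y x = 1 := by
    intro x
    have h1 : Tendsto (fun S => ∑ y, Pbar S y x) atTop (nhds (∑ y, Pi' y x)) :=
      tendsto_finset_sum _ (fun y _ => hPi y x)
    have h2 : (fun S => ∑ y, Pbar S y x) =ᶠ[atTop] fun _ => (1:ℝ) := by
      filter_upwards [eventually_ne_atTop (0:ℝ)] with S hS using qcol S hS x
    exact tendsto_nhds_unique (h1.congr' h2) tendsto_const_nhds
  -- facts about α
  have hαle : ∀ x x' : Fin N, (1/2) * ∑ y, |Pi' y x - Pi' y x'| ≤ α := by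
    intro x x'
    rw [hα]
    have : Nonempty (Fin N) := ⟨⟨0, hN⟩⟩
    calc (1/2) * ∑ y, |Pi' y x - Pi' y x'|
        ≤ ⨆ x'' : Fin N, (1/2) * ∑ y, |Pi' y x - Pi' y x''| :=
          le_ciSup (f := fun x'' : Fin N => (1/2) * ∑ y, |Pi' y x - Pi' y x''|)
            (Set.Finite.bddAbove (Set.finite_range _)) x'
      _ ≤ ⨆ x : Fin N, ⨆ x' : Fin N, (1/2) * ∑ y, |Pi' y x - Pi' y x'| :=
          le_ciSup (f := fun x : Fin N => ⨆ x' : Fin N, (1/2) * ∑ y, |Pi' y x - Pi' y x'|)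
            (Set.Finite.bddAbove (Set.finite_range _)) x
  have hα0 : 0 ≤ α := by
    have := hαle ⟨0, hN⟩ ⟨0, hN⟩
    simpa using this
  -- T ≠ 0
  have hTne : T ≠ 0 := by
    intro h0
    have hQ0 : ∀ y x, Pbar T y x = 0 := by
      intro y x; rw [hPbar, h0]; simp
    have h1 := hT ⟨0, hN⟩
    have h2 : ∑ y, |Pbar T y ⟨0, hN⟩ - Pi' y ⟨0, hN⟩| = 1 := by
      calc ∑ y, |Pbar T y ⟨0, hN⟩ - Pi' y ⟨0, hN⟩| = ∑ y, Pi' y ⟨0, hN⟩ := by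
            refine Finset.sum_congr rfl fun y _ => ?_
            rw [hQ0, zero_sub, abs_neg, abs_of_nonneg (hPinn y _)]
        _ = 1 := hPisum _
      
    rw [h2] at h1
    linarith
  set Q : Matrix (Fin N) (Fin N) ℝ := Pbar T with hQ
  set βr : ℝ := (1 + α) / 2 with hβr
  have hβ0 : 0 ≤ βr := by rw [hβr]; linarith
  -- pairwise column distance of Q
  have hδ : ∀ x x' : Fin N, ∑ y, |Q y x - Q y x'| ≤ 2 * βr := by
    intro x x'
    have h1 : ∑ y, |Q y x - Pi' y x| ≤ (1 - α) / 2 := by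
      have := hT x; linarith
    have h2 : ∑ y, |Q y x' - Pi' y x'| ≤ (1 - α) / 2 := by
      have := hT x'; linarith
    have h3 : ∑ y, |Pi' y x - Pi' y x'| ≤ 2 * α := by
      have := hαle x x'; linarith
    calc ∑ y, |Q y x - Q y x'|
        ≤ ∑ y, (|Q y x - Pi' y x| + |Pi' y x - Pi' y x'| + |Pi' y x' - Q y x'|) := by
          refine Finset.sum_le_sum fun y _ => ?_
          calc |Q y x - Q y x'| = |(Q y x - Pi' y x) + (Pi' y x - Pi' y x') + (Pi' y x' - Q y x')| := by
                ring_nf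
            _ ≤ |Q y x - Pi' y x| + |Pi' y x - Pi' y x'| + |Pi' y x' - Q y x'| :=
                (abs_add_le _ _).trans (add_le_add_left (abs_add_le _ _) _)
      _ = ∑ y, |Q y x - Pi' y x| + ∑ y, |Pi' y x - Pi' y x'| + ∑ y, |Pi' y x' - Q y x'| := by
          rw [Finset.sum_add_distrib, Finset.sum_add_distrib]
      _ ≤ (1 - α) / 2 + 2 * α + (1 - α) / 2 := by
          have h2' : ∑ y, |Pi' y x' - Q y x'| ≤ (1 - α) / 2 := by
            calc ∑ y, |Pi' y x' - Q y x'| = ∑ y, |Q y x' - Pi' y x'| :=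
                  Finset.sum_congr rfl fun y _ => abs_sub_comm _ _
              _ ≤ (1 - α) / 2 := h2
          exact add_le_add (add_le_add h1 h3) h2'
      _ = 2 * βr := by rw [hβr]; ring
  intro x
  set u : ℝ := (N : ℝ)⁻¹ with hu
  have hNne : (N : ℝ) ≠ 0 := Nat.cast_ne_zero.mpr hN.ne'
  have hu0 : 0 ≤ u := by positivity
  have hu1 : u ≤ 1 := by
    rw [hu]
    exact inv_le_one_of_one_le₀ (by exact_mod_cast hN)
  -- main induction
  have main : ∀ n : ℕ, (∑ y, ((Q ^ n) y x - u)) = 0 ∧ ∑ y, |(Q ^ n) y x - u| ≤ 2 * βr ^ n := by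
    intro n
    induction n with
    | zero =>
      simp only [pow_zero]
      have hone : ∑ y, (1 : Matrix (Fin N) (Fin N) ℝ) y x = 1 := by
        simp [Matrix.one_apply]
      constructor
      · rw [Finset.sum_sub_distrib, hone, Finset.sum_const, Finset.card_univ, Fintype.card_fin,
          nsmul_eq_mul, hu, mul_inv_cancel₀ hNne]
        norm_num
      · rw [mul_one]
        calc ∑ y, |(1 : Matrix (Fin N) (Fin N) ℝ) y x - u|
            ≤ ∑ y, ((1 : Matrix (Fin N) (Fin N) ℝ) y x + u) := by
              refine Finset.sum_le_sum fun y _ => ?_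
              rw [Matrix.one_apply]
              by_cases h : y = x
              · rw [if_pos h, abs_of_nonneg (by linarith : (0:ℝ) ≤ 1 - u)]
                linarith
              · rw [if_neg h, zero_sub, abs_neg, abs_of_nonneg hu0]
                linarith
          _ = 2 := by
              rw [Finset.sum_add_distrib, hone, Finset.sum_const, Finset.card_univ,
                Fintype.card_fin, nsmul_eq_mul, hu, mul_inv_cancel₀ hNne]
              norm_num
    | succ n ih =>
      have qrow' : ∀ y, ∑ z, Q y z = 1 := fun y => by rw [hQ]; exact qrow T hTne y
      have qcol' : ∀ z, ∑ y, Q y z = 1 := fun z => by rw [hQ]; exact qcol T hTne z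
      have hrew : ∀ y, (Q ^ (n+1)) y x - u = ∑ z, Q y z * ((Q ^ n) z x - u) := by
        intro y
        rw [pow_succ', Matrix.mul_apply]
        have h5 : ∑ z, Q y z * ((Q ^ n) z x - u) = ∑ z, Q y z * (Q ^ n) z x - (∑ z, Q y z) * u := by
          rw [Finset.sum_mul, ← Finset.sum_sub_distrib]
          exact Finset.sum_congr rfl fun z _ => by ring
        rw [h5, qrow' y, one_mul]
      constructor
      · calc ∑ y, ((Q ^ (n+1)) y x - u) = ∑ y, ∑ z, Q y z * ((Q ^ n) z x - u) :=
            Finset.sum_congr rfl fun y _ => hrew y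
          _ = ∑ z, (∑ y, Q y z) * ((Q ^ n) z x - u) := by
            rw [Finset.sum_comm]
            exact Finset.sum_congr rfl fun z _ => (Finset.sum_mul _ _ _).symm
          _ = ∑ z, ((Q ^ n) z x - u) := Finset.sum_congr rfl fun z _ => by
            rw [qcol' z, one_mul]
          _ = 0 := ih.1
      · calc ∑ y, |(Q ^ (n+1)) y x - u| = ∑ y, |∑ z, Q y z * ((Q ^ n) z x - u)| :=
            Finset.sum_congr rfl fun y _ => by rw [hrew y]
          _ ≤ βr * ∑ z, |(Q ^ n) z x - u| :=
            stmt18_contraction Q βr hβ0 hδ _ ih.1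
          _ ≤ βr * (2 * βr ^ n) := mul_le_mul_of_nonneg_left ih.2 hβ0
          _ = 2 * βr ^ (n+1) := by ring
  -- rate bound
  have hb1 : (1:ℝ) < 2 / (1 + α) := by
    rw [lt_div_iff₀ (by linarith : (0:ℝ) < 1 + α)]; linarith
  have hβpos : 0 < βr := by rw [hβr]; linarith
  have hβlt1 : βr < 1 := by rw [hβr]; linarith
  have hLle : Real.logb (2 / (1 + α)) ε⁻¹ ≤ (T' : ℝ) := Nat.ceil_le.mp hT'
  have hrate : βr ^ T' ≤ ε := by
    have e1 : βr ^ T' = βr ^ ((T' : ℕ) : ℝ) := (Real.rpow_natCast βr T').symm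
    have e2 : βr ^ ((T' : ℕ) : ℝ) ≤ βr ^ (Real.logb (2 / (1 + α)) ε⁻¹) :=
      Real.rpow_le_rpow_of_exponent_ge hβpos hβlt1.le hLle
    have e3 : βr ^ (Real.logb (2 / (1 + α)) ε⁻¹) = ε := by
      have hβb : βr = (2 / (1 + α))⁻¹ := by rw [hβr, inv_div]
      rw [hβb, Real.inv_rpow (by linarith : (0:ℝ) ≤ 2 / (1 + α)),
        Real.rpow_logb (by linarith) (ne_of_gt hb1) (inv_pos.mpr hε), inv_inv]
    rw [e1]
    linarith
  have hfin := (main T').2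
  calc (1/2) * ∑ y, |(Q ^ T') y x - u| ≤ (1/2) * (2 * βr ^ T') := by linarith
    _ = βr ^ T' := by ring
    _ ≤ ε := hrate
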